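/- Assuming every worm is consistent with GLP_Λ (irreflexivity of <_α), each worm is equivalent in GLP_Λ to a unique worm in worm normal form: if B and C are both in WNF and GLP_Λ proves A ↔ B and A ↔ C, then B = C. -/

import Mathlib

inductive Formula (L : Type) : Type where
  | bot : Formula L
  | var : Nat → Formula L
  | imp : Formula L → Formula L → Formula L
  | box : L → Formula L → Formula L

namespace Formula

variable {L : Type}

def neg (φ : Formula L) : Formula L := imp φ bot
def top : Formula L := neg bot
def and (φ ψ : Formula L) : Formula L := neg (imp φ ψ.neg)
def or (φ ψ : Formula L) : Formula L := imp φ.neg ψ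
def iff (φ ψ : Formula L) : Formula L := (imp φ ψ).and (imp ψ φ)
def dia (α : L) (φ : Formula L) : Formula L := neg (box α φ.neg)

end Formula

open Formula

/-- Provability in the polymodal provability logic `GLP_Λ` over a linear order. -/
inductive GLP {L : Type} [LinearOrder L] : Formula L → Prop where
  | k1 : ∀ φ ψ : Formula L, GLP (φ.imp (ψ.imp φ))
  | k2 : ∀ φ ψ χ : Formula L, GLP ((φ.imp (ψ.imp χ)).imp ((φ.imp ψ).imp (φ.imp χ)))
  | k3 : ∀ φ ψ : Formula L, GLP ((φ.neg.imp ψ.neg).imp (ψ.imp φ))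
  | dist : ∀ (α : L) (φ ψ : Formula L), GLP ((Formula.box α (φ.imp ψ)).imp ((Formula.box α φ).imp (Formula.box α ψ)))
  | lob : ∀ (α : L) (φ : Formula L), GLP ((Formula.box α ((Formula.box α φ).imp φ)).imp (Formula.box α φ))
  | trans : ∀ (α β : L) (φ : Formula L), α ≤ β → GLP ((Formula.box α φ).imp (Formula.box β (Formula.box α φ)))
  | negintro : ∀ (α β : L) (φ : Formula L), α < β → GLP ((dia α φ).imp (Formula.box β (dia α φ)))
  | mono : ∀ (α β : L) (φ : Formula L), α ≤ β → GLP ((Formula.box α φ).imp (Formula.box β φ))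
  | mp : ∀ φ ψ : Formula L, GLP (φ.imp ψ) → GLP φ → GLP ψ
  | nec : ∀ (α : L) (φ : Formula L), GLP φ → GLP (Formula.box α φ)

/-- The worm (iterated consistency statement) associated to a list of modalities. -/
def worm {L : Type} : List L → Formula L
  | [] => Formula.top
  | α :: w => Formula.dia α (worm w)

/-- `Lt α A B` iff `GLP ⊢ B → ⟨α⟩A`. -/
def Lt {L : Type} [LinearOrder L] (α : L) (A B : List L) : Prop :=
  GLP ((worm B).imp (Formula.dia α (worm A)))

def Le {L : Type} [LinearOrder L] (α : L) (A B : List L) : Prop :=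
  Lt α A B ∨ A = B

/-- Join a list of blocks, separating consecutive blocks by the modality `α`. -/
def joinSep {L : Type} (α : L) : List (List L) → List L
  | [] => []
  | [p] => p
  | p :: ps => p ++ α :: joinSep α ps

/-- Worm normal form. -/
inductive WNF {L : Type} [LinearOrder L] [SuccOrder L] : List L → Prop where
  | nil : WNF []
  | node (α : L) (parts : List (List L))
      (hlen : 2 ≤ parts.length)
      (hmods : ∀ p ∈ parts, ∀ β ∈ p, α < β)
      (hwnf : ∀ p ∈ parts, WNF p)
      (hord : parts.Chain' (Le (Order.succ α)))
      : WNF (joinSep α parts)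

section GLPInfra
variable {L : Type} [LinearOrder L]
open Formula

inductive PP : List (Formula L) → Formula L → Prop
  | hyp : ∀ {Γ φ}, φ ∈ Γ → PP Γ φ
  | thm : ∀ {Γ φ}, GLP φ → PP Γ φ
  | mp : ∀ {Γ φ ψ}, PP Γ (φ.imp ψ) → PP Γ φ → PP Γ ψ

theorem glp_id (φ : Formula L) : GLP (φ.imp φ) :=
  GLP.mp _ _ (GLP.mp _ _ (GLP.k2 φ (φ.imp φ) φ) (GLP.k1 φ (φ.imp φ))) (GLP.k1 φ φ)

theorem PP.h0 {Γ : List (Formula L)} {φ : Formula L} : PP (φ :: Γ) φ :=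
  PP.hyp (List.mem_cons_self)

theorem PP.h1 {Γ : List (Formula L)} {χ φ : Formula L} : PP (χ :: φ :: Γ) φ :=
  PP.hyp (List.mem_cons_of_mem _ (List.mem_cons_self))

theorem PP.h2 {Γ : List (Formula L)} {χ χ' φ : Formula L} : PP (χ :: χ' :: φ :: Γ) φ :=
  PP.hyp (List.mem_cons_of_mem _ (List.mem_cons_of_mem _ (List.mem_cons_self)))

private theorem PP.dedAux {Δ : List (Formula L)} {ψ} (h : PP Δ ψ) :
    ∀ Γ φ, Δ = φ :: Γ → PP Γ (φ.imp ψ) := by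
  induction h with
  | hyp hm =>
      intro Γ φ hΔ
      subst hΔ
      rcases List.mem_cons.1 hm with rfl | hm
      · exact PP.thm (glp_id _)
      · exact PP.mp (PP.thm (GLP.k1 _ _)) (PP.hyp hm)
  | thm h => intro Γ φ _; exact PP.mp (PP.thm (GLP.k1 _ _)) (PP.thm h)
  | mp _ _ ih1 ih2 =>
      intro Γ φ hΔ
      exact PP.mp (PP.mp (PP.thm (GLP.k2 _ _ _)) (ih1 Γ φ hΔ)) (ih2 Γ φ hΔ)

theorem PP.ded {Γ : List (Formula L)} {φ ψ} (h : PP (φ :: Γ) ψ) : PP Γ (φ.imp ψ) :=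
  PP.dedAux h Γ φ rfl

private theorem PP.toGLPAux {Δ : List (Formula L)} {φ} (h : PP Δ φ) :
    Δ = [] → GLP φ := by
  induction h with
  | hyp hm => intro hΔ; subst hΔ; simp at hm
  | thm h => intro _; exact h
  | mp _ _ ih1 ih2 => intro hΔ; exact GLP.mp _ _ (ih1 hΔ) (ih2 hΔ)

theorem PP.toGLP {φ : Formula L} (h : PP [] φ) : GLP φ := PP.toGLPAux h rfl

theorem gtrans {φ ψ χ : Formula L} (h1 : GLP (φ.imp ψ)) (h2 : GLP (ψ.imp χ)) :
    GLP (φ.imp χ) :=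
  (PP.ded (PP.mp (PP.thm h2) (PP.mp (PP.thm h1) PP.h0))).toGLP

theorem gweaken {φ : Formula L} (ψ : Formula L) (h : GLP φ) : GLP (ψ.imp φ) :=
  GLP.mp _ _ (GLP.k1 _ _) h

theorem gtop : GLP (Formula.top : Formula L) := glp_id Formula.bot

theorem g_to_top (φ : Formula L) : GLP (φ.imp Formula.top) := gweaken _ gtop

theorem dni (φ : Formula L) : GLP (φ.imp φ.neg.neg) :=
  (PP.ded (PP.ded (PP.mp (φ := φ) PP.h0 PP.h1))).toGLP

theorem dne (φ : Formula L) : GLP (φ.neg.neg.imp φ) :=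
  GLP.mp _ _ (GLP.k3 φ φ.neg.neg) (dni φ.neg)

theorem PP.raa {Γ : List (Formula L)} {φ} (h : PP (φ.neg :: Γ) Formula.bot) : PP Γ φ :=
  PP.mp (PP.thm (dne φ)) h.ded

theorem gexf (φ : Formula L) : GLP (Formula.bot.imp φ) :=
  (PP.ded (PP.raa PP.h1)).toGLP

theorem and_intro (φ ψ : Formula L) : GLP (φ.imp (ψ.imp (φ.and ψ))) :=
  (PP.ded (PP.ded (PP.ded (PP.mp (φ := ψ)
    (PP.mp (φ := φ) PP.h0 PP.h2) PP.h1)))).toGLP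

theorem andL (φ ψ : Formula L) : GLP ((φ.and ψ).imp φ) := by
  have key : GLP (φ.neg.imp (φ.imp ψ.neg)) :=
    (PP.ded (PP.ded (PP.mp (PP.thm (gexf ψ.neg))
      (PP.mp (φ := φ) PP.h1 PP.h0)))).toGLP
  exact (PP.ded (PP.raa (PP.mp (φ := φ.imp ψ.neg) PP.h1
    (PP.mp (PP.thm key) PP.h0)))).toGLP

theorem andR (φ ψ : Formula L) : GLP ((φ.and ψ).imp ψ) :=
  (PP.ded (PP.raa (PP.mp (φ := φ.imp ψ.neg) PP.h1
    (PP.mp (PP.thm (GLP.k1 ψ.neg φ)) PP.h0)))).toGLP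

theorem and_pair {φ ψ χ : Formula L} (h1 : GLP (φ.imp ψ)) (h2 : GLP (φ.imp χ)) :
    GLP (φ.imp (ψ.and χ)) :=
  (PP.ded (PP.mp (PP.mp (PP.thm (and_intro ψ χ))
    (PP.mp (PP.thm h1) PP.h0))
    (PP.mp (PP.thm h2) PP.h0))).toGLP

theorem contrap {φ ψ : Formula L} (h : GLP (φ.imp ψ)) : GLP (ψ.neg.imp φ.neg) :=
  (PP.ded (PP.ded (PP.mp (φ := ψ) PP.h1
    (PP.mp (PP.thm h) PP.h0)))).toGLP

theorem iffL {φ ψ : Formula L} (h : GLP (φ.iff ψ)) : GLP (φ.imp ψ) :=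
  GLP.mp _ _ (andL _ _) h

theorem iffR {φ ψ : Formula L} (h : GLP (φ.iff ψ)) : GLP (ψ.imp φ) :=
  GLP.mp _ _ (andR _ _) h

theorem boxReg {φ ψ : Formula L} (a : L) (h : GLP (φ.imp ψ)) :
    GLP ((Formula.box a φ).imp (Formula.box a ψ)) :=
  GLP.mp _ _ (GLP.dist a φ ψ) (GLP.nec a _ h)

theorem diaReg {φ ψ : Formula L} (a : L) (h : GLP (φ.imp ψ)) :
    GLP ((Formula.dia a φ).imp (Formula.dia a ψ)) :=
  contrap (boxReg a (contrap h))

theorem dia_le {a b : L} (φ : Formula L) (hab : a ≤ b) :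
    GLP ((Formula.dia b φ).imp (Formula.dia a φ)) :=
  contrap (GLP.mono a b φ.neg hab)

theorem dia4 (a : L) (φ : Formula L) :
    GLP ((Formula.dia a (Formula.dia a φ)).imp (Formula.dia a φ)) := by
  have h1 : GLP ((Formula.box a φ.neg).imp (Formula.box a (Formula.box a φ.neg))) :=
    GLP.trans a a φ.neg le_rfl
  have h2 : GLP ((Formula.box a (Formula.box a φ.neg)).imp
      (Formula.box a (Formula.dia a φ).neg)) :=
    boxReg a (dni (Formula.box a φ.neg))
  exact contrap (gtrans h1 h2)

theorem Kconj (a : L) (φ ψ : Formula L) :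
    GLP (((Formula.dia a φ).and (Formula.box a ψ)).imp (Formula.dia a (φ.and ψ))) := by
  have h0 : GLP (ψ.imp ((φ.and ψ).neg.imp φ.neg)) :=
    (PP.ded (PP.ded (PP.ded (PP.mp (φ := φ.and ψ) PP.h1
      (PP.mp (PP.mp (PP.thm (and_intro φ ψ)) PP.h0) PP.h2))))).toGLP
  have h1 : GLP ((Formula.box a ψ).imp
      ((Formula.box a (φ.and ψ).neg).imp (Formula.box a φ.neg))) :=
    gtrans (boxReg a h0) (GLP.dist a _ _)
  exact (PP.ded (PP.ded (PP.mp
    (PP.mp (PP.thm (andL (Formula.dia a φ) (Formula.box a ψ))) PP.h1)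
    (PP.mp (PP.mp (PP.thm h1)
      (PP.mp (PP.thm (andR (Formula.dia a φ) (Formula.box a ψ))) PP.h1))
      PP.h0)))).toGLP

end GLPInfra
section WormInfra
variable {L : Type} [LinearOrder L]
open Formula

/-- F1: dropping a tail of a worm is implied. -/
theorem worm_prefix (A B : List L) : GLP ((worm (A ++ B)).imp (worm A)) := by
  induction A with
  | nil => exact g_to_top _
  | cons a A ih => exact diaReg a ih

/-- F2: if all modalities of the (nonempty) prefix are ≥ β, one can pass to ⟨β⟩(tail). -/
theorem worm_drop (β : L) (A B : List L) (hA : A ≠ []) (h : ∀ a ∈ A, β ≤ a) :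
    GLP ((worm (A ++ B)).imp (Formula.dia β (worm B))) := by
  induction A with
  | nil => exact absurd rfl hA
  | cons a A ih =>
      rcases eq_or_ne A [] with rfl | hne
      · exact dia_le (worm B) (h a (by simp))
      · have h1 : GLP ((worm (a :: (A ++ B))).imp (Formula.dia β (worm (A ++ B)))) :=
          dia_le _ (h a (by simp))
        have h2 := diaReg β (ih hne (fun x hx => h x (by simp [hx])))
        exact gtrans (gtrans h1 h2) (dia4 β (worm B))

/-- F3, merging direction. -/
theorem worm_merge (β : L) (A B : List L) (h : ∀ a ∈ A, β < a) :
    GLP (((worm A).and (Formula.dia β (worm B))).imp (worm (A ++ β :: B))) := by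
  induction A with
  | nil => exact andR _ _
  | cons a A ih =>
      have e1 : GLP ((Formula.dia β (worm B)).imp
          (Formula.box a (Formula.dia β (worm B)))) :=
        GLP.negintro β a (worm B) (h a (by simp))
      have step : GLP (((worm (a :: A)).and (Formula.dia β (worm B))).imp
          ((Formula.dia a (worm A)).and (Formula.box a (Formula.dia β (worm B))))) :=
        and_pair (andL _ _) (gtrans (andR _ _) e1)
      have step2 := gtrans step (Kconj a (worm A) (Formula.dia β (worm B)))
      exact gtrans step2 (diaReg a (ih (fun x hx => h x (by simp [hx]))))

/-- F3, splitting direction. -/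
theorem worm_split (β : L) (A B : List L) (h : ∀ a ∈ A, β ≤ a) :
    GLP ((worm (A ++ β :: B)).imp ((worm A).and (Formula.dia β (worm B)))) := by
  have h1 : GLP ((worm (A ++ β :: B)).imp (worm A)) := worm_prefix A (β :: B)
  have h2 : GLP ((worm ((A ++ [β]) ++ B)).imp (Formula.dia β (worm B))) :=
    worm_drop β (A ++ [β]) B (by simp) (by
      intro x hx
      rcases List.mem_append.1 hx with hx | hx
      · exact h x hx
      · simp at hx; subst hx; exact le_rfl)
  rw [List.append_assoc] at h2
  exact and_pair h1 (by simpa using h2)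

/-- Core step: from Q → ⟨s⟩X (β < s) we get Q ∧ ⟨β⟩φ → ⟨β⟩(X ∧ ⟨β⟩φ). -/
theorem core_step {β s : L} (hβs : β < s) {Q X φ : Formula L}
    (hq : GLP (Q.imp (Formula.dia s X))) :
    GLP ((Q.and (Formula.dia β φ)).imp (Formula.dia β (X.and (Formula.dia β φ)))) := by
  have d1 : GLP ((Formula.dia β φ).imp (Formula.box s (Formula.dia β φ))) :=
    GLP.negintro β s φ hβs
  have step : GLP ((Q.and (Formula.dia β φ)).imp
      ((Formula.dia s X).and (Formula.box s (Formula.dia β φ)))) :=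
    and_pair (gtrans (andL _ _) hq) (gtrans (andR _ _) d1)
  exact gtrans (gtrans step (Kconj s X (Formula.dia β φ)))
    (dia_le (X.and (Formula.dia β φ)) hβs.le)

/-- One block step: Q → ⟨s⟩r gives Q ∧ ⟨β⟩T → ⟨β⟩(r β T). -/
theorem block_step {β s : L} (hβs : β < s) {Q : Formula L} {r T : List L}
    (hr : ∀ x ∈ r, β < x) (hq : GLP (Q.imp (Formula.dia s (worm r)))) :
    GLP ((Q.and (Formula.dia β (worm T))).imp (Formula.dia β (worm (r ++ β :: T)))) :=
  gtrans (core_step hβs hq) (diaReg β (worm_merge β r T hr))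

end WormInfra
section JoinInfra
set_option linter.unusedSectionVars false
variable {L : Type} [LinearOrder L]
open Formula

theorem joinSep_cons (β : L) (p : List L) (ps : List (List L)) (h : ps ≠ []) :
    joinSep β (p :: ps) = p ++ β :: joinSep β ps := by
  cases ps with
  | nil => exact absurd rfl h
  | cons q qs => rfl

theorem joinSep_ne_nil (β : L) (ps : List (List L)) (h : 2 ≤ ps.length) :
    joinSep β ps ≠ [] := by
  match ps, h with
  | p :: q :: t, _ => rw [joinSep_cons β p (q :: t) (by simp)]; simp

theorem mem_joinSep {β : L} {ps : List (List L)} {x : L} (h : x ∈ joinSep β ps) :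
    x = β ∨ ∃ p ∈ ps, x ∈ p := by
  induction ps with
  | nil => simp [joinSep] at h
  | cons p ps ih =>
      rcases eq_or_ne ps [] with rfl | hne
      · exact Or.inr ⟨p, by simp, h⟩
      · rw [joinSep_cons β p ps hne] at h
        rcases List.mem_append.1 h with h | h
        · exact Or.inr ⟨p, by simp, h⟩
        · rcases List.mem_cons.1 h with rfl | h
          · exact Or.inl rfl
          · rcases ih h with h | ⟨q, hq, hx⟩
            · exact Or.inl h
            · exact Or.inr ⟨q, by simp [hq], hx⟩

theorem beta_mem_joinSep (β : L) (ps : List (List L)) (h : 2 ≤ ps.length) :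
    β ∈ joinSep β ps := by
  match ps, h with
  | p :: q :: t, _ => rw [joinSep_cons β p (q :: t) (by simp)]; simp

theorem mem_block_joinSep {β : L} {ps : List (List L)} {p : List L} (hp : p ∈ ps) (x : L)
    (hx : x ∈ p) : x ∈ joinSep β ps := by
  induction ps with
  | nil => simp at hp
  | cons q qs ih =>
      rcases eq_or_ne qs [] with rfl | hne
      · simp at hp; subst hp; exact hx
      · rw [joinSep_cons β q qs hne]
        rcases List.mem_cons.1 hp with rfl | hp
        · exact List.mem_append.2 (Or.inl hx)
        · exact List.mem_append.2 (Or.inr (List.mem_cons_of_mem _ (ih hp)))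

theorem block_len_le {β : L} {ps : List (List L)} {p : List L} (hp : p ∈ ps) :
    p.length ≤ (joinSep β ps).length := by
  induction ps with
  | nil => simp at hp
  | cons q qs ih =>
      rcases eq_or_ne qs [] with rfl | hne
      · simp at hp; subst hp; exact le_rfl
      · rw [joinSep_cons β q qs hne]
        rcases List.mem_cons.1 hp with rfl | hp
        · simp
        · have := ih hp
          simp; omega

theorem block_len_lt {β : L} {ps : List (List L)} {p : List L} (hp : p ∈ ps)
    (h : 2 ≤ ps.length) : p.length < (joinSep β ps).length := by
  cases ps with
  | nil => simp at hp
  | cons q qs =>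
      have hne : qs ≠ [] := by
        intro hq; subst hq; simp at h
      rw [joinSep_cons β q qs hne]
      rcases List.mem_cons.1 hp with rfl | hp
      · simp
      · have := block_len_le (β := β) hp
        simp; omega

theorem foldr_joinSep (β : L) (rs R : List (List L)) (hR : R ≠ []) :
    rs.foldr (fun r acc => r ++ β :: acc) (joinSep β R) = joinSep β (rs ++ R) := by
  induction rs with
  | nil => simp
  | cons r rs ih =>
      have hne : rs ++ R ≠ [] := by simp [hR]
      simp only [List.foldr_cons, ih, List.cons_append]
      rw [joinSep_cons β r (rs ++ R) hne]

/-- Iterated block chain: all blocks below q, with tail ⟨β⟩T. -/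
theorem chainB {β s : L} (hβs : β < s) {Q : Formula L} (rs : List (List L)) (T : List L)
    (hne : rs ≠ []) (hmods : ∀ r ∈ rs, ∀ x ∈ r, β < x)
    (hq : ∀ r ∈ rs, GLP (Q.imp (Formula.dia s (worm r)))) :
    GLP ((Q.and (Formula.dia β (worm T))).imp
      (Formula.dia β (worm (rs.foldr (fun r acc => r ++ β :: acc) T)))) := by
  induction rs with
  | nil => exact absurd rfl hne
  | cons r rs ih =>
      rcases eq_or_ne rs [] with rfl | hrs
      · simpa using block_step hβs (hmods r (by simp)) (hq r (by simp))
      · have ih' := ih hrs (fun x hx => hmods x (by simp [hx]))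
          (fun x hx => hq x (by simp [hx]))
        have pair : GLP ((Q.and (Formula.dia β (worm T))).imp
            (Q.and (Formula.dia β (worm (rs.foldr (fun r acc => r ++ β :: acc) T))))) :=
          and_pair (andL _ _) ih'
        exact gtrans pair (block_step hβs (hmods r (by simp)) (hq r (by simp)))

/-- Iterated block chain without a tail. -/
theorem chainB0 {β s : L} (hβs : β < s) {Q : Formula L} (rs : List (List L))
    (hne : rs ≠ []) (hmods : ∀ r ∈ rs, ∀ x ∈ r, β < x)
    (hq : ∀ r ∈ rs, GLP (Q.imp (Formula.dia s (worm r)))) :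
    GLP (Q.imp (Formula.dia β (worm (joinSep β rs)))) := by
  induction rs with
  | nil => exact absurd rfl hne
  | cons r rs ih =>
      rcases eq_or_ne rs [] with rfl | hrs
      · exact gtrans (hq r (by simp)) (dia_le (worm r) hβs.le)
      · have ih' := ih hrs (fun x hx => hmods x (by simp [hx]))
          (fun x hx => hq x (by simp [hx]))
        have pair : GLP (Q.imp (Q.and (Formula.dia β (worm (joinSep β rs))))) :=
          and_pair (glp_id Q) ih'
        have bs := block_step hβs (hmods r (by simp)) (hq r (by simp))
          (T := joinSep β rs)
        rw [joinSep_cons β r rs hrs]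
        exact gtrans pair bs

/-- Dropping a nonempty prefix of blocks. -/
theorem dropPre (β : L) (L₁ L₂ : List (List L)) (h1 : L₁ ≠ []) (h2 : L₂ ≠ [])
    (hm : ∀ p ∈ L₁, ∀ x ∈ p, β ≤ x) :
    GLP ((worm (joinSep β (L₁ ++ L₂))).imp (Formula.dia β (worm (joinSep β L₂)))) := by
  induction L₁ with
  | nil => exact absurd rfl h1
  | cons p ps ih =>
      have hpe : ps ++ L₂ ≠ [] := by simp [h2]
      have key : GLP ((worm (joinSep β ((p :: ps) ++ L₂))).imp
          (Formula.dia β (worm (joinSep β (ps ++ L₂))))) := by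
        rw [show (p :: ps) ++ L₂ = p :: (ps ++ L₂) from rfl,
          joinSep_cons β p (ps ++ L₂) hpe]
        have : GLP ((worm ((p ++ [β]) ++ joinSep β (ps ++ L₂))).imp
            (Formula.dia β (worm (joinSep β (ps ++ L₂))))) :=
          worm_drop β (p ++ [β]) _ (by simp) (by
            intro x hx
            rcases List.mem_append.1 hx with hx | hx
            · exact (hm p (by simp) x hx)
            · simp at hx; subst hx; exact le_rfl)
        simpa [List.append_assoc] using this
      rcases eq_or_ne ps [] with rfl | hps
      · simpa using key
      · have ih' := ih hps (fun x hx => hm x (by simp [hx]))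
        exact gtrans (gtrans key (diaReg β ih')) (dia4 β _)

/-- Lt facts -/
theorem Lt_trans {γ : L} {A B C : List L} (h1 : Lt γ A B) (h2 : Lt γ B C) : Lt γ A C :=
  gtrans h2 (gtrans (diaReg γ h1) (dia4 γ (worm A)))

theorem Lt_weaken {γ α : L} {A B : List L} (hαγ : α ≤ γ) (h : Lt γ A B) : Lt α A B :=
  gtrans h (dia_le (worm A) hαγ)

theorem Le_trans' {γ : L} {A B C : List L} (h1 : Le γ A B) (h2 : Le γ B C) : Le γ A C := by
  rcases h1 with h1 | rfl
  · rcases h2 with h2 | rfl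
    · exact Or.inl (Lt_trans h1 h2)
    · exact Or.inl h1
  · exact h2

theorem Le_Lt_trans {γ : L} {A B C : List L} (h1 : Le γ A B) (h2 : Lt γ B C) : Lt γ A C := by
  rcases h1 with h1 | rfl
  · exact Lt_trans h1 h2
  · exact h2

theorem chain_last {γ : L} {A : List (List L)} {p : List L}
    (h : List.Chain' (Le γ) (A ++ [p])) : ∀ r ∈ A, Le γ r p := by
  induction A with
  | nil => simp
  | cons a A ih =>
      have h' := List.isChain_cons.1 (show List.Chain' (Le γ) (a :: (A ++ [p])) from h)
      intro r hr
      rcases List.mem_cons.1 hr with rfl | hr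
      · rcases A with _ | ⟨b, B⟩
        · simpa using h'.1 p (by simp)
        · have h1 : Le γ r b := h'.1 b (by simp)
          exact Le_trans' h1 (ih h'.2 b (by simp))
      · exact ih h'.2 r hr

end JoinInfra
section CompSec
set_option linter.unusedSectionVars false
open Formula

theorem chainPrefix {α : Type*} {r : α → α → Prop} {l₁ l₂ : List α}
    (h : List.Chain' r (l₁ ++ l₂)) : List.Chain' r l₁ := by
  induction l₁ with
  | nil => exact List.isChain_nil
  | cons a l ih =>
      cases l with
      | nil => exact List.isChain_singleton a
      | cons b t =>
          have h' := List.isChain_cons_cons.1 (show List.Chain' r (a :: (b :: (t ++ l₂))) from h)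
          exact List.isChain_cons_cons.2 ⟨h'.1, ih h'.2⟩

variable {L : Type} [LinearOrder L] [SuccOrder L]

theorem mainStep
    (irr : ∀ (D : List L) (α : L), ¬ GLP ((worm D).imp (Formula.dia α (worm D))))
    (β : L) (A B R : List (List L)) (p q : List L)
    (hm₁ : ∀ r ∈ (A ++ [p]) ++ R, ∀ x ∈ r, β < x)
    (hm₂ : ∀ r ∈ (B ++ [q]) ++ R, ∀ x ∈ r, β < x)
    (hc₁ : List.Chain' (Le (Order.succ β)) ((A ++ [p]) ++ R))
    (hpq : Lt (Order.succ β) p q) :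
    Lt β (joinSep β ((A ++ [p]) ++ R)) (joinSep β ((B ++ [q]) ++ R)) := by
  set s := Order.succ β with hs
  -- q is nonempty, else irreflexivity is violated
  rcases eq_or_ne q [] with rfl | hqne
  · exfalso
    have h1 : GLP (Formula.dia s (worm p)) := GLP.mp _ _ hpq gtop
    exact irr p s (gweaken _ h1)
  obtain ⟨x, hx⟩ := List.exists_mem_of_ne_nil q hqne
  have hβx : β < x := hm₂ q (by simp) x hx
  have hβs : β < s := Order.lt_succ_of_not_isMax
    (fun hmax => absurd (hmax hβx.le) (not_le.2 hβx))
  have hchain : List.Chain' (Le s) (A ++ [p]) := chainPrefix hc₁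
  have hLe : ∀ r ∈ A, Le s r p := chain_last hchain
  have hq_all : ∀ r ∈ A ++ [p], GLP ((worm q).imp (Formula.dia s (worm r))) := by
    intro r hr
    rcases List.mem_append.1 hr with hr | hr
    · exact Le_Lt_trans (hLe r hr) hpq
    · simp at hr; subst hr; exact hpq
  have mods₁ : ∀ r ∈ A ++ [p], ∀ x ∈ r, β < x :=
    fun r hr => hm₁ r (List.mem_append.2 (Or.inl hr))
  have hqmods : ∀ a ∈ q, β ≤ a := fun a ha => (hm₂ q (by simp) a ha).le
  have step2 : GLP ((worm (joinSep β (q :: R))).imp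
      (Formula.dia β (worm (joinSep β ((A ++ [p]) ++ R))))) := by
    rcases eq_or_ne R [] with rfl | hRne
    · have := chainB0 hβs (Q := worm q) (A ++ [p]) (by simp) mods₁ hq_all
      simpa [joinSep] using this
    · have split : GLP ((worm (joinSep β (q :: R))).imp
          ((worm q).and (Formula.dia β (worm (joinSep β R))))) := by
        rw [joinSep_cons β q R hRne]
        exact worm_split β q (joinSep β R) hqmods
      have cb := chainB hβs (Q := worm q) (A ++ [p]) (joinSep β R) (by simp) mods₁ hq_all
      rw [foldr_joinSep β (A ++ [p]) R hRne] at cb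
      exact gtrans split cb
  show GLP ((worm (joinSep β ((B ++ [q]) ++ R))).imp _)
  rcases eq_or_ne B [] with rfl | hBne
  · simpa using step2
  · have drop : GLP ((worm (joinSep β (B ++ (q :: R)))).imp
        (Formula.dia β (worm (joinSep β (q :: R))))) :=
      dropPre β B (q :: R) hBne (by simp)
        (fun r hr a ha => (hm₂ r (by simp [hr]) a ha).le)
    have comp1 := gtrans drop (gtrans (diaReg β step2) (dia4 β _))
    rw [show (B ++ [q]) ++ R = B ++ (q :: R) by simp]
    exact comp1

theorem compLemma
    (irr : ∀ (D : List L) (α : L), ¬ GLP ((worm D).imp (Formula.dia α (worm D))))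
    (β : L) :
    ∀ (k : Nat) (L₁ L₂ R : List (List L)),
      L₁.length + L₂.length ≤ k →
      (∀ p ∈ L₁ ++ R, ∀ x ∈ p, β < x) →
      (∀ p ∈ L₂ ++ R, ∀ x ∈ p, β < x) →
      List.Chain' (Le (Order.succ β)) (L₁ ++ R) →
      List.Chain' (Le (Order.succ β)) (L₂ ++ R) →
      (L₁ = [] → R ≠ []) → (L₂ = [] → R ≠ []) →
      (∀ p ∈ L₁ ++ R, ∀ q ∈ L₂ ++ R,
        p = q ∨ Lt (Order.succ β) p q ∨ Lt (Order.succ β) q p) →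
      L₁ = L₂ ∨ Lt β (joinSep β (L₁ ++ R)) (joinSep β (L₂ ++ R)) ∨
        Lt β (joinSep β (L₂ ++ R)) (joinSep β (L₁ ++ R)) := by
  intro k
  induction k with
  | zero =>
      intro L₁ L₂ R hk _ _ _ _ _ _ _
      have : L₁ = [] ∧ L₂ = [] := by
        constructor <;> (apply List.eq_nil_of_length_eq_zero; omega)
      exact Or.inl (this.1.trans this.2.symm)
  | succ k ih =>
      intro L₁ L₂ R hk hm₁ hm₂ hc₁ hc₂ hne₁ hne₂ hcmp
      rcases L₁.eq_nil_or_concat with rfl | ⟨A, p, rfl⟩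
      · rcases L₂.eq_nil_or_concat with rfl | ⟨B, q, rfl⟩
        · exact Or.inl rfl
        · simp only [List.concat_eq_append] at hk hm₂ hc₂ hne₂ hcmp ⊢
          refine Or.inr (Or.inl ?_)
          have drop : GLP ((worm (joinSep β ((B ++ [q]) ++ R))).imp
              (Formula.dia β (worm (joinSep β R)))) := by
            rw [show (B ++ [q]) ++ R = (B ++ [q]) ++ R from rfl]
            exact dropPre β (B ++ [q]) R (by simp) (hne₁ rfl)
              (fun r hr a ha => (hm₂ r (List.mem_append.2 (Or.inl hr)) a ha).le)
          simpa [Lt] using drop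
      · simp only [List.concat_eq_append] at hk hm₁ hc₁ hne₁ hcmp ⊢
        rcases L₂.eq_nil_or_concat with rfl | ⟨B, q, rfl⟩
        · refine Or.inr (Or.inr ?_)
          have drop : GLP ((worm (joinSep β ((A ++ [p]) ++ R))).imp
              (Formula.dia β (worm (joinSep β R)))) :=
            dropPre β (A ++ [p]) R (by simp) (hne₂ rfl)
              (fun r hr a ha => (hm₁ r (List.mem_append.2 (Or.inl hr)) a ha).le)
          simpa [Lt] using drop
        · simp only [List.concat_eq_append] at hk hm₂ hc₂ hne₂ hcmp ⊢
          have hpmem : p ∈ (A ++ [p]) ++ R := by simp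
          have hqmem : q ∈ (B ++ [q]) ++ R := by simp
          rcases hcmp p hpmem q hqmem with rfl | hlt | hlt
          · -- equal last blocks: strip
            have e₁ : (A ++ [p]) ++ R = A ++ (p :: R) := by simp
            have e₂ : (B ++ [p]) ++ R = B ++ (p :: R) := by simp
            rw [e₁] at hm₁ hc₁ ⊢
            rw [e₂] at hm₂ hc₂ ⊢
            have hk' : A.length + B.length ≤ k := by simp at hk; omega
            rcases ih A B (p :: R) hk' hm₁ hm₂ hc₁ hc₂ (by simp) (by simp)
              (fun a ha b hb => hcmp a (e₁ ▸ ha) b (e₂ ▸ hb)) with h | h | h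
            · subst h; exact Or.inl rfl
            · exact Or.inr (Or.inl h)
            · exact Or.inr (Or.inr h)
          · exact Or.inr (Or.inl (mainStep irr β A B R p q hm₁ hm₂ hc₁ hlt))
          · exact Or.inr (Or.inr (mainStep irr β B A R q p hm₂ hm₁ hc₂ hlt))

end CompSec
section TrichSec
set_option linter.unusedSectionVars false
open Formula
variable {L : Type} [LinearOrder L] [SuccOrder L]

theorem trichAux
    (irr : ∀ (D : List L) (α : L), ¬ GLP ((worm D).imp (Formula.dia α (worm D))))
    (n : Nat)
    (IH : ∀ p q : List L, p.length + q.length < n → WNF p → WNF q →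
      ∀ γ : L, (∀ x ∈ p, γ ≤ x) → (∀ x ∈ q, γ ≤ x) →
      p = q ∨ Lt γ p q ∨ Lt γ q p)
    (βx βy : L) (P Q : List (List L)) (hle : βx ≤ βy)
    (hlenP : 2 ≤ P.length) (hmodsP : ∀ p ∈ P, ∀ x ∈ p, βx < x)
    (hwnfP : ∀ p ∈ P, WNF p) (hordP : P.Chain' (Le (Order.succ βx)))
    (hlenQ : 2 ≤ Q.length) (hmodsQ : ∀ p ∈ Q, ∀ x ∈ p, βy < x)
    (hwnfQ : ∀ p ∈ Q, WNF p) (hordQ : Q.Chain' (Le (Order.succ βy)))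
    (hn : (joinSep βx P).length + (joinSep βy Q).length ≤ n) :
    joinSep βx P = joinSep βy Q ∨ Lt βx (joinSep βx P) (joinSep βy Q) ∨
      Lt βx (joinSep βy Q) (joinSep βx P) := by
  by_cases hxy : βx = βy
  · subst hxy
    have hcmp : ∀ p ∈ P ++ ([] : List (List L)), ∀ q ∈ Q ++ ([] : List (List L)),
        p = q ∨ Lt (Order.succ βx) p q ∨ Lt (Order.succ βx) q p := by
      intro p hp q hq
      simp only [List.append_nil] at hp hq
      have hsz : p.length + q.length < n := by
        have h1 := block_len_lt (β := βx) hp hlenP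
        have h2 := block_len_lt (β := βx) hq hlenQ
        omega
      exact IH p q hsz (hwnfP p hp) (hwnfQ q hq) (Order.succ βx)
        (fun x hx => Order.succ_le_of_lt (hmodsP p hp x hx))
        (fun x hx => Order.succ_le_of_lt (hmodsQ q hq x hx))
    have hres := compLemma irr βx (P.length + Q.length) P Q [] le_rfl
      (by simpa using hmodsP) (by simpa using hmodsQ)
      (by simpa using hordP) (by simpa using hordQ)
      (by intro h; subst h; simp at hlenP)
      (by intro h; subst h; simp at hlenQ)
      hcmp
    simp only [List.append_nil] at hres
    rcases hres with h | h | h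
    · exact Or.inl (congrArg (joinSep βx) h)
    · exact Or.inr (Or.inl h)
    · exact Or.inr (Or.inr h)
  · have hlt : βx < βy := lt_of_le_of_ne hle hxy
    have hYwnf : WNF (joinSep βy Q) := WNF.node βy Q hlenQ hmodsQ hwnfQ hordQ
    have hYmods : ∀ x ∈ joinSep βy Q, βx < x := by
      intro x hx
      rcases mem_joinSep hx with rfl | ⟨p, hp, hxp⟩
      · exact hlt
      · exact hlt.trans (hmodsQ p hp x hxp)
    have hcmp : ∀ p ∈ P ++ ([] : List (List L)),
        ∀ q ∈ [joinSep βy Q] ++ ([] : List (List L)),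
        p = q ∨ Lt (Order.succ βx) p q ∨ Lt (Order.succ βx) q p := by
      intro p hp q hq
      simp only [List.append_nil] at hp hq
      simp only [List.mem_singleton] at hq
      subst hq
      have hsz : p.length + (joinSep βy Q).length < n := by
        have h1 := block_len_lt (β := βx) hp hlenP
        omega
      exact IH p (joinSep βy Q) hsz (hwnfP p hp) hYwnf (Order.succ βx)
        (fun x hx => Order.succ_le_of_lt (hmodsP p hp x hx))
        (fun x hx => Order.succ_le_of_lt (hYmods x hx))
    have hres := compLemma irr βx (P.length + 1) P [joinSep βy Q] [] le_rfl
      (by simpa using hmodsP)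
      (by
        intro r hr x hx
        simp only [List.append_nil, List.mem_singleton] at hr
        subst hr
        exact hYmods x hx)
      (by simpa using hordP) (List.isChain_singleton _)
      (by intro h; subst h; simp at hlenP)
      (by simp)
      hcmp
    simp only [List.append_nil] at hres
    rcases hres with h | h | h
    · exfalso; subst h; simp at hlenP
    · exact Or.inr (Or.inl (by simpa [joinSep] using h))
    · exact Or.inr (Or.inr (by simpa [joinSep] using h))

theorem trich
    (irr : ∀ (D : List L) (α : L), ¬ GLP ((worm D).imp (Formula.dia α (worm D)))) :
    ∀ (n : Nat) (X Y : List L) (α : L), X.length + Y.length ≤ n → WNF X → WNF Y →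
      (∀ x ∈ X, α ≤ x) → (∀ x ∈ Y, α ≤ x) →
      X = Y ∨ Lt α X Y ∨ Lt α Y X := by
  intro n
  induction n using Nat.strong_induction_on with
  | _ n ih =>
  intro X Y α hn hX hY hmX hmY
  have IH' : ∀ p q : List L, p.length + q.length < n → WNF p → WNF q →
      ∀ γ : L, (∀ x ∈ p, γ ≤ x) → (∀ x ∈ q, γ ≤ x) →
      p = q ∨ Lt γ p q ∨ Lt γ q p := by
    intro p q hpq hp hq γ hγp hγq
    exact ih (p.length + q.length) hpq p q γ le_rfl hp hq hγp hγq
  cases hX with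
  | nil =>
      cases hY with
      | nil => exact Or.inl rfl
      | node βy Q hlenQ hmodsQ hwnfQ hordQ =>
          refine Or.inr (Or.inl ?_)
          have := worm_drop α (joinSep βy Q) [] (joinSep_ne_nil βy Q hlenQ) hmY
          simpa [Lt] using this
  | node βx P hlenP hmodsP hwnfP hordP =>
      cases hY with
      | nil =>
          refine Or.inr (Or.inr ?_)
          have := worm_drop α (joinSep βx P) [] (joinSep_ne_nil βx P hlenP) hmX
          simpa [Lt] using this
      | node βy Q hlenQ hmodsQ hwnfQ hordQ =>
          have hax : α ≤ βx := hmX βx (beta_mem_joinSep βx P hlenP)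
          have hay : α ≤ βy := hmY βy (beta_mem_joinSep βy Q hlenQ)
          rcases le_total βx βy with hle | hle
          · rcases trichAux irr n IH' βx βy P Q hle hlenP hmodsP hwnfP hordP
              hlenQ hmodsQ hwnfQ hordQ hn with h | h | h
            · exact Or.inl h
            · exact Or.inr (Or.inl (Lt_weaken hax h))
            · exact Or.inr (Or.inr (Lt_weaken hax h))
          · rcases trichAux irr n IH' βy βx Q P hle hlenQ hmodsQ hwnfQ hordQ
              hlenP hmodsP hwnfP hordP (by omega) with h | h | h
            · exact Or.inl h.symm
            · exact Or.inr (Or.inr (Lt_weaken hay h))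
            · exact Or.inr (Or.inl (Lt_weaken hay h))

theorem exists_lb (l : List L) (h : l ≠ []) : ∃ a : L, ∀ x ∈ l, a ≤ x := by
  induction l with
  | nil => exact absurd rfl h
  | cons a l ih =>
      rcases eq_or_ne l [] with rfl | hne
      · exact ⟨a, by simp⟩
      · obtain ⟨b, hb⟩ := ih hne
        refine ⟨min a b, ?_⟩
        intro x hx
        rcases List.mem_cons.1 hx with rfl | hx
        · exact min_le_left _ _
        · exact le_trans (min_le_right a b) (hb x hx)

end TrichSec

/-- Assuming irreflexivity of the relations `<_α`, worm normal forms are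
unique: if `B` and `C` are in WNF and both `GLP`-equivalent to `A`, then
`B = C`. -/
theorem WNF_unique {L : Type} [LinearOrder L] [SuccOrder L]
    (irrefl : ∀ (D : List L) (α : L), ¬ GLP ((worm D).imp (Formula.dia α (worm D))))
    (A B C : List L) (hB : WNF B) (hC : WNF C)
    (h₁ : GLP ((worm A).iff (worm B))) (h₂ : GLP ((worm A).iff (worm C))) :
    B = C := by
  by_cases h : B = C
  · exact h
  · exfalso
    have hne : B ++ C ≠ [] := by
      intro hnil
      rcases List.append_eq_nil_iff.1 hnil with ⟨hB', hC'⟩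
      exact h (hB'.trans hC'.symm)
    obtain ⟨α, hα⟩ := exists_lb (B ++ C) hne
    rcases trich irrefl (B.length + C.length) B C α le_rfl hB hC
        (fun x hx => hα x (List.mem_append.2 (Or.inl hx)))
        (fun x hx => hα x (List.mem_append.2 (Or.inr hx))) with h' | h' | h'
    · exact h h'
    · exact irrefl B α (gtrans (gtrans (iffR h₁) (iffL h₂)) h')
    · exact irrefl C α (gtrans (gtrans (iffR h₂) (iffL h₁)) h')
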